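/- Let 0 < 1/n ≪ 1/ℓ, α ≤ 1 and let G₁, …, G_{4ℓ+2} be graphs on a common vertex set V = {1,…,n}, each with minimum degree at least (1/2 + α)n. Let U ⊆ V with |U| ≤ αn/4. Then for every set L ⊆ V of size ℓ+1 there exist disjoint sets of vertices R ⊆ V \ (U ∪ L) and vertices x, y ∈ R such that for every v ∈ L there is an x,y-path P_v = e₁e₂…e_{4ℓ+2} with vertex set R ∪ {v} and e_i an edge of G_i for every i ∈ {1,…,4ℓ+2}. -/
import Mathlib

open Finset

section AbsorbHelpers

lemma dgreedy {V : Type*} [DecidableEq V] [Nonempty V] (N : ℕ)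
    (T : ℕ → (ℕ → V) → Finset V)
    (hT : ∀ k, k < N → ∀ f g : ℕ → V, (∀ i, i < k → f i = g i) → T k f = T k g)
    (hc : ∀ k, k < N → ∀ f, N ≤ (T k f).card) :
    ∃ f : ℕ → V, (∀ k, k < N → f k ∈ T k f) ∧
      ∀ i, i < N → ∀ j, j < N → i ≠ j → f i ≠ f j := by
  suffices h : ∀ M, M ≤ N → ∃ f : ℕ → V, (∀ k, k < M → f k ∈ T k f) ∧
      ∀ i, i < M → ∀ j, j < M → i ≠ j → f i ≠ f j from h N le_rfl
  intro M
  induction M with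
  | zero =>
    intro _
    exact ⟨fun _ => Classical.arbitrary V, fun k hk => absurd hk (by omega),
      fun i hi => absurd hi (by omega)⟩
  | succ M ih =>
    intro hM
    obtain ⟨f, hf1, hf2⟩ := ih (by omega)
    have hne : (T M f \ (Finset.range M).image f).Nonempty := by
      rw [← Finset.card_pos]
      have h1 : ((Finset.range M).image f).card ≤ M := by
        refine le_trans Finset.card_image_le ?_
        simp
      have h2 := hc M (by omega) f
      have h3 := Finset.card_le_card_sdiff_add_card (s := T M f) (t := (Finset.range M).image f)
      omega
    obtain ⟨w, hw⟩ := hne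
    rw [Finset.mem_sdiff] at hw
    refine ⟨fun i => if i = M then w else f i, ?_, ?_⟩
    · intro k hk
      have hTk : T k (fun i => if i = M then w else f i) = T k f :=
        hT k (by omega) _ _ (fun i hi => if_neg (by omega))
      rw [hTk]
      show (if k = M then w else f k) ∈ T k f
      by_cases hkM : k = M
      · rw [if_pos hkM, hkM]
        exact hw.1
      · rw [if_neg hkM]
        exact hf1 k (by omega)
    · intro a ha b hb hab
      show (if a = M then w else f a) ≠ (if b = M then w else f b)
      by_cases haM : a = M <;> by_cases hbM : b = M
      · exact absurd (haM.trans hbM.symm) hab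
      · rw [if_pos haM, if_neg hbM]
        intro hEq
        exact hw.2 (Finset.mem_image.mpr ⟨b, Finset.mem_range.mpr (by omega), hEq.symm⟩)
      · rw [if_neg haM, if_pos hbM]
        intro hEq
        exact hw.2 (Finset.mem_image.mpr ⟨a, Finset.mem_range.mpr (by omega), hEq⟩)
      · rw [if_neg haM, if_neg hbM]
        exact hf2 a (by omega) b (by omega) hab

def bIdx (ℓ m : ℕ) : ℕ := if m = ℓ then 1 else if m + 1 = ℓ then 2 else 5 + m

lemma bIdx_le (ℓ m : ℕ) : bIdx ℓ m ≤ 5 + m := by unfold bIdx; split_ifs <;> omega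

lemma bv_top (ℓ : ℕ) : bIdx ℓ ℓ = 1 := by unfold bIdx; rw [if_pos rfl]

lemma bv_pen (ℓ : ℕ) (hℓ : 1 ≤ ℓ) : bIdx ℓ (ℓ-1) = 2 := by
  unfold bIdx; rw [if_neg (by omega), if_pos (by omega)]

lemma bv_gen (ℓ m : ℕ) (hm : m + 2 ≤ ℓ) : bIdx ℓ m = 5 + m := by
  unfold bIdx; rw [if_neg (by omega), if_neg (by omega)]

def rho (ℓ s : ℕ) : ℕ :=
  if s = 0 then 4*ℓ+1
  else if s = 4*ℓ-2 then 0
  else if s = 4*ℓ-1 then 1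
  else if s = 4*ℓ then 4*ℓ+2
  else if s = 4*ℓ+1 then 3
  else if s = 4*ℓ+2 then 4
  else if s % 4 = 1 then bIdx ℓ (s/4)
  else if s % 4 = 2 then 2*ℓ+3 + s/4
  else if s % 4 = 3 then 3*ℓ+2 + s/4
  else ℓ+4 + (s/4 - 1)

def rinv (ℓ r : ℕ) : ℕ :=
  if r = 4*ℓ+1 then 0
  else if r = 0 then 4*ℓ-2
  else if r = 1 then 4*ℓ-1
  else if r = 4*ℓ+2 then 4*ℓ
  else if r = 3 then 4*ℓ+1
  else if r = 4 then 4*ℓ+2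
  else if r = 2 then 4*(ℓ-1)+1
  else if r < ℓ+4 then 4*(r-5)+1
  else if r < 2*ℓ+3 then 4*(r-(ℓ+4))+4
  else if r < 3*ℓ+2 then 4*(r-(2*ℓ+3))+2
  else 4*(r-(3*ℓ+2))+3

-- rho eval lemmas
lemma rv0 (ℓ : ℕ) : rho ℓ 0 = 4*ℓ+1 := by unfold rho; rw [if_pos rfl]

lemma rvm (ℓ : ℕ) (hℓ : 1 ≤ ℓ) : rho ℓ (4*ℓ-2) = 0 := by
  unfold rho; rw [if_neg (by omega), if_pos rfl]

lemma rvbl (ℓ : ℕ) (hℓ : 1 ≤ ℓ) : rho ℓ (4*ℓ-1) = 1 := by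
  unfold rho; rw [if_neg (by omega), if_neg (by omega), if_pos rfl]

lemma rvz (ℓ : ℕ) (hℓ : 1 ≤ ℓ) : rho ℓ (4*ℓ) = 4*ℓ+2 := by
  unfold rho; rw [if_neg (by omega), if_neg (by omega), if_neg (by omega), if_pos rfl]

lemma rvt (ℓ : ℕ) (hℓ : 1 ≤ ℓ) : rho ℓ (4*ℓ+1) = 3 := by
  unfold rho
  rw [if_neg (by omega), if_neg (by omega), if_neg (by omega), if_neg (by omega), if_pos rfl]

lemma rvy (ℓ : ℕ) (hℓ : 1 ≤ ℓ) : rho ℓ (4*ℓ+2) = 4 := by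
  unfold rho
  rw [if_neg (by omega), if_neg (by omega), if_neg (by omega), if_neg (by omega),
    if_neg (by omega), if_pos rfl]

lemma rvb (ℓ k : ℕ) (hℓ : 1 ≤ ℓ) (hk : k + 1 ≤ ℓ) : rho ℓ (4*k+1) = bIdx ℓ k := by
  unfold rho
  rw [if_neg (by omega), if_neg (by omega), if_neg (by omega), if_neg (by omega),
    if_neg (by omega), if_neg (by omega), if_pos (by omega)]
  congr 1
  omega

lemma rvd (ℓ k : ℕ) (hℓ : 1 ≤ ℓ) (hk : k + 2 ≤ ℓ) : rho ℓ (4*k+2) = 2*ℓ+3+k := by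
  unfold rho
  rw [if_neg (by omega), if_neg (by omega), if_neg (by omega), if_neg (by omega),
    if_neg (by omega), if_neg (by omega), if_neg (by omega), if_pos (by omega)]
  omega

lemma rvg (ℓ k : ℕ) (hℓ : 1 ≤ ℓ) (hk : k + 2 ≤ ℓ) : rho ℓ (4*k+3) = 3*ℓ+2+k := by
  unfold rho
  rw [if_neg (by omega), if_neg (by omega), if_neg (by omega), if_neg (by omega),
    if_neg (by omega), if_neg (by omega), if_neg (by omega), if_neg (by omega),
    if_pos (by omega)]
  omega

lemma rvc (ℓ k : ℕ) (hℓ : 1 ≤ ℓ) (hk : k + 2 ≤ ℓ) : rho ℓ (4*k+4) = ℓ+4+k := by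
  unfold rho
  rw [if_neg (by omega), if_neg (by omega), if_neg (by omega), if_neg (by omega),
    if_neg (by omega), if_neg (by omega), if_neg (by omega), if_neg (by omega),
    if_neg (by omega)]
  omega

-- rinv eval lemmas
lemma iv0 (ℓ : ℕ) : rinv ℓ (4*ℓ+1) = 0 := by unfold rinv; rw [if_pos rfl]

lemma ivm (ℓ : ℕ) : rinv ℓ 0 = 4*ℓ-2 := by
  unfold rinv; rw [if_neg (c := (0:ℕ) = 4*ℓ+1) (by omega), if_pos rfl]

lemma ivbl (ℓ : ℕ) (hℓ : 1 ≤ ℓ) : rinv ℓ 1 = 4*ℓ-1 := by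
  unfold rinv
  rw [if_neg (c := (1:ℕ) = 4*ℓ+1) (by omega), if_neg (c := (1:ℕ) = 0) (by decide), if_pos rfl]

lemma ivz (ℓ : ℕ) (hℓ : 1 ≤ ℓ) : rinv ℓ (4*ℓ+2) = 4*ℓ := by
  unfold rinv
  rw [if_neg (c := 4*ℓ+2 = 4*ℓ+1) (by omega), if_neg (c := 4*ℓ+2 = 0) (by omega),
    if_neg (c := 4*ℓ+2 = 1) (by omega), if_pos rfl]

lemma ivt (ℓ : ℕ) (hℓ : 1 ≤ ℓ) : rinv ℓ 3 = 4*ℓ+1 := by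
  unfold rinv
  rw [if_neg (c := (3:ℕ) = 4*ℓ+1) (by omega), if_neg (c := (3:ℕ) = 0) (by decide),
    if_neg (c := (3:ℕ) = 1) (by decide), if_neg (c := (3:ℕ) = 4*ℓ+2) (by omega), if_pos rfl]

lemma ivy (ℓ : ℕ) (hℓ : 1 ≤ ℓ) : rinv ℓ 4 = 4*ℓ+2 := by
  unfold rinv
  rw [if_neg (c := (4:ℕ) = 4*ℓ+1) (by omega), if_neg (c := (4:ℕ) = 0) (by decide),
    if_neg (c := (4:ℕ) = 1) (by decide), if_neg (c := (4:ℕ) = 4*ℓ+2) (by omega),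
    if_neg (c := (4:ℕ) = 3) (by decide), if_pos rfl]

lemma ivb2 (ℓ : ℕ) (hℓ : 1 ≤ ℓ) : rinv ℓ 2 = 4*(ℓ-1)+1 := by
  unfold rinv
  rw [if_neg (c := (2:ℕ) = 4*ℓ+1) (by omega), if_neg (c := (2:ℕ) = 0) (by decide),
    if_neg (c := (2:ℕ) = 1) (by decide), if_neg (c := (2:ℕ) = 4*ℓ+2) (by omega),
    if_neg (c := (2:ℕ) = 3) (by decide), if_neg (c := (2:ℕ) = 4) (by decide), if_pos rfl]

lemma ivb (ℓ m : ℕ) (hℓ : 1 ≤ ℓ) (hm : m + 2 ≤ ℓ) : rinv ℓ (5+m) = 4*m+1 := by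
  unfold rinv
  rw [if_neg (by omega), if_neg (by omega), if_neg (by omega), if_neg (by omega),
    if_neg (by omega), if_neg (by omega), if_neg (by omega), if_pos (by omega)]
  omega

lemma ivc (ℓ m : ℕ) (hℓ : 1 ≤ ℓ) (hm : m + 2 ≤ ℓ) : rinv ℓ (ℓ+4+m) = 4*m+4 := by
  unfold rinv
  rw [if_neg (by omega), if_neg (by omega), if_neg (by omega), if_neg (by omega),
    if_neg (by omega), if_neg (by omega), if_neg (by omega), if_neg (by omega),
    if_pos (by omega)]
  omega

lemma ivd (ℓ m : ℕ) (hℓ : 1 ≤ ℓ) (hm : m + 2 ≤ ℓ) : rinv ℓ (2*ℓ+3+m) = 4*m+2 := by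
  unfold rinv
  rw [if_neg (by omega), if_neg (by omega), if_neg (by omega), if_neg (by omega),
    if_neg (by omega), if_neg (by omega), if_neg (by omega), if_neg (by omega),
    if_neg (by omega), if_pos (by omega)]
  omega

lemma ivg (ℓ m : ℕ) (hℓ : 1 ≤ ℓ) (hm : m + 2 ≤ ℓ) : rinv ℓ (3*ℓ+2+m) = 4*m+3 := by
  unfold rinv
  rw [if_neg (by omega), if_neg (by omega), if_neg (by omega), if_neg (by omega),
    if_neg (by omega), if_neg (by omega), if_neg (by omega), if_neg (by omega),
    if_neg (by omega), if_neg (by omega)]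
  omega

lemma slot_cases (ℓ s : ℕ) (hℓ : 1 ≤ ℓ) (hs : s < 4*ℓ+3) :
    s = 0 ∨ s = 4*ℓ-2 ∨ s = 4*ℓ-1 ∨ s = 4*ℓ ∨ s = 4*ℓ+1 ∨ s = 4*ℓ+2 ∨
    (∃ k, k+1 ≤ ℓ ∧ s = 4*k+1) ∨ (∃ k, k+2 ≤ ℓ ∧ s = 4*k+2) ∨
    (∃ k, k+2 ≤ ℓ ∧ s = 4*k+3) ∨ (∃ k, k+2 ≤ ℓ ∧ s = 4*k+4) := by
  by_cases h0 : s = 0; · exact Or.inl h0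
  by_cases hm : s = 4*ℓ-2; · exact Or.inr (Or.inl hm)
  by_cases hb : s = 4*ℓ-1; · exact Or.inr (Or.inr (Or.inl hb))
  by_cases hz : s = 4*ℓ; · exact Or.inr (Or.inr (Or.inr (Or.inl hz)))
  by_cases ht : s = 4*ℓ+1; · exact Or.inr (Or.inr (Or.inr (Or.inr (Or.inl ht))))
  by_cases hy : s = 4*ℓ+2; · exact Or.inr (Or.inr (Or.inr (Or.inr (Or.inr (Or.inl hy)))))
  rcases (by omega : s % 4 = 0 ∨ s % 4 = 1 ∨ s % 4 = 2 ∨ s % 4 = 3) with h|h|h|h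
  · exact Or.inr (Or.inr (Or.inr (Or.inr (Or.inr (Or.inr (Or.inr (Or.inr (Or.inr
      ⟨s/4 - 1, by omega, by omega⟩))))))))
  · exact Or.inr (Or.inr (Or.inr (Or.inr (Or.inr (Or.inr (Or.inl ⟨s/4, by omega, by omega⟩))))))
  · exact Or.inr (Or.inr (Or.inr (Or.inr (Or.inr (Or.inr (Or.inr
      (Or.inl ⟨s/4, by omega, by omega⟩)))))))
  · exact Or.inr (Or.inr (Or.inr (Or.inr (Or.inr (Or.inr (Or.inr (Or.inr
      (Or.inl ⟨s/4, by omega, by omega⟩))))))))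

lemma rho_rinv (ℓ s : ℕ) (hℓ : 1 ≤ ℓ) (hs : s < 4*ℓ+3) : rinv ℓ (rho ℓ s) = s := by
  rcases slot_cases ℓ s hℓ hs with h|h|h|h|h|h|⟨k,hk,h⟩|⟨k,hk,h⟩|⟨k,hk,h⟩|⟨k,hk,h⟩ <;> subst h
  · rw [rv0, iv0]
  · rw [rvm ℓ hℓ, ivm]
  · rw [rvbl ℓ hℓ, ivbl ℓ hℓ]
  · rw [rvz ℓ hℓ, ivz ℓ hℓ]
  · rw [rvt ℓ hℓ, ivt ℓ hℓ]
  · rw [rvy ℓ hℓ, ivy ℓ hℓ]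
  · rw [rvb ℓ k hℓ hk]
    by_cases hk2 : k + 2 ≤ ℓ
    · rw [bv_gen ℓ k hk2, ivb ℓ k hℓ hk2]
    · have hke : k = ℓ - 1 := by omega
      rw [hke, bv_pen ℓ hℓ, ivb2 ℓ hℓ]
  · rw [rvd ℓ k hℓ hk, ivd ℓ k hℓ hk]
  · rw [rvg ℓ k hℓ hk, ivg ℓ k hℓ hk]
  · rw [rvc ℓ k hℓ hk, ivc ℓ k hℓ hk]

lemma rho_inj (ℓ : ℕ) (hℓ : 1 ≤ ℓ) (s s' : ℕ) (hs : s < 4*ℓ+3) (hs' : s' < 4*ℓ+3)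
    (hne : s ≠ s') : rho ℓ s ≠ rho ℓ s' := by
  intro hEq
  apply hne
  rw [← rho_rinv ℓ s hℓ hs, ← rho_rinv ℓ s' hℓ hs', hEq]

lemma rho_lt (ℓ s : ℕ) (hℓ : 1 ≤ ℓ) (hs : s < 4*ℓ+3) : rho ℓ s < 4*ℓ+3 := by
  have hb := bIdx_le ℓ (s/4)
  unfold rho
  split_ifs <;> omega



def colF (ℓ c : ℕ) : Fin (4*ℓ+2) := ⟨c % (4*ℓ+2), Nat.mod_lt _ (by omega)⟩

noncomputable def nbrF {n N : ℕ} (G : Fin N → SimpleGraph (Fin n)) (c : Fin N) (u : Fin n) :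
    Finset (Fin n) :=
  @Finset.filter _ (fun w => (G c).Adj u w) (Classical.decPred _) Finset.univ

lemma mem_nbrF {n N : ℕ} (G : Fin N → SimpleGraph (Fin n)) (c : Fin N) (u w : Fin n) :
    w ∈ nbrF G c u ↔ (G c).Adj u w := by
  unfold nbrF
  simp

def trunc (n k : ℕ) (vv : ℕ → Fin n) (f : ℕ → Fin n) : ℕ → Fin n :=
  fun i => if i < k then f i else vv 0

def spc (ℓ n : ℕ) (vv : ℕ → Fin n) (k : ℕ) (f : ℕ → Fin n) :
    (Fin (4*ℓ+2) × Fin n) × (Fin (4*ℓ+2) × Fin n) :=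
  if k = 0 then ((colF ℓ (4*ℓ-3), vv (ℓ-1)), (colF ℓ (4*ℓ-2), vv ℓ))
  else if k = 1 then ((colF ℓ (4*ℓ-2), f 0), (colF ℓ (4*ℓ-1), vv ℓ))
  else if k = 2 then ((colF ℓ (4*ℓ-3), f 0), (colF ℓ (4*ℓ-1), f 1))
  else if k = 3 then ((colF ℓ (4*ℓ), f 1), (colF ℓ (4*ℓ), f 2))
  else if k = 4 then ((colF ℓ (4*ℓ+1), f 3), (colF ℓ (4*ℓ+1), f 3))
  else if k = 4*ℓ+1 then ((colF ℓ 0, f (bIdx ℓ 0)), (colF ℓ 0, vv 0))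
  else if k = 4*ℓ+2 then ((colF ℓ 0, f (bIdx ℓ 0)), (colF ℓ 0, f (bIdx ℓ 0)))
  else if k < ℓ+4 then ((colF ℓ (4*ℓ-1), f 1), (colF ℓ (4*ℓ), f 3))
  else if k < 2*ℓ+3 then
    ((colF ℓ (4*(k-(ℓ+4))+4), f (bIdx ℓ (k-(ℓ+4)+1))), (colF ℓ (4*(k-(ℓ+4))+4), vv (k-(ℓ+4)+1)))
  else if k < 3*ℓ+2 then
    ((colF ℓ (4*(k-(2*ℓ+3))+1), f (bIdx ℓ (k-(2*ℓ+3)))), (colF ℓ (4*(k-(2*ℓ+3))+1), vv (k-(2*ℓ+3))))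
  else ((colF ℓ (4*(k-(3*ℓ+2))+2), f (2*ℓ+3+(k-(3*ℓ+2)))), (colF ℓ (4*(k-(3*ℓ+2))+3), f (ℓ+4+(k-(3*ℓ+2)))))

noncomputable def TT (ℓ n : ℕ) (G : Fin (4*ℓ+2) → SimpleGraph (Fin n)) (UL : Finset (Fin n))
    (vv : ℕ → Fin n) (k : ℕ) (f : ℕ → Fin n) : Finset (Fin n) :=
  ((nbrF G (spc ℓ n vv k (trunc n k vv f)).1.1 (spc ℓ n vv k (trunc n k vv f)).1.2) ∩
    (nbrF G (spc ℓ n vv k (trunc n k vv f)).2.1 (spc ℓ n vv k (trunc n k vv f)).2.2)) \ UL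

lemma TT_cong (ℓ n : ℕ) (G : Fin (4*ℓ+2) → SimpleGraph (Fin n)) (UL : Finset (Fin n))
    (vv : ℕ → Fin n) : ∀ k, k < 4*ℓ+3 → ∀ f g : ℕ → Fin n,
    (∀ i, i < k → f i = g i) → TT ℓ n G UL vv k f = TT ℓ n G UL vv k g := by
  intro k _ f g h
  have ht : trunc n k vv f = trunc n k vv g := by
    funext i
    unfold trunc
    by_cases hi : i < k
    · rw [if_pos hi, if_pos hi, h i hi]
    · rw [if_neg hi, if_neg hi]
  unfold TT
  rw [ht]

-- spc eval lemmas (for arbitrary h : ℕ → Fin n)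
section SpcEval

variable {ℓ n : ℕ} (vv h : ℕ → Fin n)

lemma sp0 : spc ℓ n vv 0 h = ((colF ℓ (4*ℓ-3), vv (ℓ-1)), (colF ℓ (4*ℓ-2), vv ℓ)) := by
  unfold spc; rw [if_pos rfl]

lemma sp1 : spc ℓ n vv 1 h = ((colF ℓ (4*ℓ-2), h 0), (colF ℓ (4*ℓ-1), vv ℓ)) := by
  unfold spc; rw [if_neg (c := (1:ℕ) = 0) (by decide), if_pos rfl]

lemma sp2 : spc ℓ n vv 2 h = ((colF ℓ (4*ℓ-3), h 0), (colF ℓ (4*ℓ-1), h 1)) := by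
  unfold spc
  rw [if_neg (c := (2:ℕ) = 0) (by decide), if_neg (c := (2:ℕ) = 1) (by decide), if_pos rfl]

lemma sp3 : spc ℓ n vv 3 h = ((colF ℓ (4*ℓ), h 1), (colF ℓ (4*ℓ), h 2)) := by
  unfold spc
  rw [if_neg (c := (3:ℕ) = 0) (by decide), if_neg (c := (3:ℕ) = 1) (by decide),
    if_neg (c := (3:ℕ) = 2) (by decide), if_pos rfl]

lemma sp4 : spc ℓ n vv 4 h = ((colF ℓ (4*ℓ+1), h 3), (colF ℓ (4*ℓ+1), h 3)) := by
  unfold spc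
  rw [if_neg (c := (4:ℕ) = 0) (by decide), if_neg (c := (4:ℕ) = 1) (by decide),
    if_neg (c := (4:ℕ) = 2) (by decide), if_neg (c := (4:ℕ) = 3) (by decide), if_pos rfl]

lemma spx (hℓ : 1 ≤ ℓ) :
    spc ℓ n vv (4*ℓ+1) h = ((colF ℓ 0, h (bIdx ℓ 0)), (colF ℓ 0, vv 0)) := by
  unfold spc
  rw [if_neg (by omega), if_neg (by omega), if_neg (by omega), if_neg (by omega),
    if_neg (by omega), if_pos rfl]

lemma spz (hℓ : 1 ≤ ℓ) :
    spc ℓ n vv (4*ℓ+2) h = ((colF ℓ 0, h (bIdx ℓ 0)), (colF ℓ 0, h (bIdx ℓ 0))) := by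
  unfold spc
  rw [if_neg (by omega), if_neg (by omega), if_neg (by omega), if_neg (by omega),
    if_neg (by omega), if_neg (by omega), if_pos rfl]

lemma spb (j : ℕ) (hℓ : 1 ≤ ℓ) (hj : j + 2 ≤ ℓ) :
    spc ℓ n vv (5+j) h = ((colF ℓ (4*ℓ-1), h 1), (colF ℓ (4*ℓ), h 3)) := by
  unfold spc
  rw [if_neg (by omega), if_neg (by omega), if_neg (by omega), if_neg (by omega),
    if_neg (by omega), if_neg (by omega), if_neg (by omega), if_pos (by omega)]

lemma spcc (k : ℕ) (hℓ : 1 ≤ ℓ) (hk : k + 2 ≤ ℓ) :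
    spc ℓ n vv (ℓ+4+k) h =
      ((colF ℓ (4*k+4), h (bIdx ℓ (k+1))), (colF ℓ (4*k+4), vv (k+1))) := by
  unfold spc
  rw [if_neg (by omega), if_neg (by omega), if_neg (by omega), if_neg (by omega),
    if_neg (by omega), if_neg (by omega), if_neg (by omega), if_neg (by omega),
    if_pos (by omega), show ℓ+4+k-(ℓ+4) = k from by omega]

lemma spdd (k : ℕ) (hℓ : 1 ≤ ℓ) (hk : k + 2 ≤ ℓ) :
    spc ℓ n vv (2*ℓ+3+k) h =
      ((colF ℓ (4*k+1), h (bIdx ℓ k)), (colF ℓ (4*k+1), vv k)) := by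
  unfold spc
  rw [if_neg (by omega), if_neg (by omega), if_neg (by omega), if_neg (by omega),
    if_neg (by omega), if_neg (by omega), if_neg (by omega), if_neg (by omega),
    if_neg (by omega), if_pos (by omega), show 2*ℓ+3+k-(2*ℓ+3) = k from by omega]

lemma spgg (k : ℕ) (hℓ : 1 ≤ ℓ) (hk : k + 2 ≤ ℓ) :
    spc ℓ n vv (3*ℓ+2+k) h =
      ((colF ℓ (4*k+2), h (2*ℓ+3+k)), (colF ℓ (4*k+3), h (ℓ+4+k))) := by
  unfold spc
  rw [if_neg (by omega), if_neg (by omega), if_neg (by omega), if_neg (by omega),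
    if_neg (by omega), if_neg (by omega), if_neg (by omega), if_neg (by omega),
    if_neg (by omega), if_neg (by omega), show 3*ℓ+2+k-(3*ℓ+2) = k from by omega]

end SpcEval

end AbsorbHelpers

set_option maxHeartbeats 1000000 in
/-- Lemma 5.3 (robust existence of absorbing gadgets): for `0 < 1/n ≪ 1/ℓ, α ≤ 1`,
if `G₁,…,G_{4ℓ+2}` are graphs on `{1,…,n}` with minimum degree at least `(1/2+α)n`,
and `U` has size at most `αn/4`, then for every set `L` of size `ℓ+1` there are a set
`R` disjoint from `U ∪ L` and vertices `x, y ∈ R` such that every `v ∈ L` lies on an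
`x,y`-path with vertex set `R ∪ {v}` whose `i`-th edge is in `G_i` for `i = 1,…,4ℓ+2`
(an `L`-absorbing gadget). -/
theorem stmt_11 (α : ℝ) (ℓ : ℕ) (hα : 0 < α) (hα1 : α ≤ 1) (hℓ : 1 ≤ ℓ) :
    ∃ n₀ : ℕ, ∀ n : ℕ, n₀ ≤ n →
    ∀ G : Fin (4*ℓ + 2) → SimpleGraph (Fin n),
    (∀ (i : Fin (4*ℓ + 2)) (v : Fin n), (1/2 + α) * n ≤ ((G i).neighborSet v).ncard) →
    ∀ U : Finset (Fin n), (U.card : ℝ) ≤ α * n / 4 →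
    ∀ L : Finset (Fin n), L.card = ℓ + 1 →
    ∃ (R : Finset (Fin n)) (x y : Fin n),
      Disjoint R U ∧ Disjoint R L ∧ x ∈ R ∧ y ∈ R ∧ x ≠ y ∧
      ∀ v ∈ L, ∃ p : Fin (4*ℓ + 3) → Fin n, Function.Injective p ∧
        p 0 = x ∧ p (Fin.last (4*ℓ + 2)) = y ∧
        Set.range p = ↑R ∪ {v} ∧
        ∀ i : Fin (4*ℓ + 2), (G i).Adj (p i.castSucc) (p i.succ) := by
  classical
  refine ⟨(Nat.ceil ((400:ℝ) * (ℓ+1) / α)) + 1, fun n hn G hdeg U hU L hL => ?_⟩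
  have hn1 : 1 ≤ n := le_trans (Nat.le_add_left 1 _) hn
  haveI : Nonempty (Fin n) := ⟨⟨0, hn1⟩⟩
  have hnn : ((400:ℝ)*(ℓ+1))/α ≤ n := by
    have h1 : ((Nat.ceil ((400:ℝ)*(ℓ+1)/α) : ℕ) : ℝ) ≤ (n : ℝ) := by
      exact_mod_cast le_trans (Nat.le_succ _) hn
    exact le_trans (Nat.le_ceil _) h1
  have hαn : (400:ℝ)*(ℓ+1) ≤ α * n := by
    rw [div_le_iff₀ hα] at hnn
    linarith
  -- enumeration of L
  set eL := L.orderIsoOfFin hL with heL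
  set vv : ℕ → Fin n := fun m => ((eL ⟨min m ℓ, by omega⟩ : L) : Fin n) with hvvdef
  have hvvL : ∀ m, vv m ∈ L := by
    intro m
    simp only [hvvdef]
    exact (eL ⟨min m ℓ, by omega⟩).2
  have hvvsurj : ∀ w, w ∈ L → ∃ j, j ≤ ℓ ∧ vv j = w := by
    intro w hw
    refine ⟨(eL.symm ⟨w, hw⟩ : Fin (ℓ+1)).val, by omega, ?_⟩
    simp only [hvvdef]
    have hm : min ((eL.symm ⟨w, hw⟩ : Fin (ℓ+1)) : ℕ) ℓ = (eL.symm ⟨w, hw⟩ : Fin (ℓ+1)).val := by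
      have := (eL.symm ⟨w, hw⟩ : Fin (ℓ+1)).isLt
      omega
    have h2 : (⟨min ((eL.symm ⟨w, hw⟩ : Fin (ℓ+1)) : ℕ) ℓ, by omega⟩ : Fin (ℓ+1)) =
        eL.symm ⟨w, hw⟩ := by
      apply Fin.ext
      simp [hm]
    rw [h2, OrderIso.apply_symm_apply]
  set UL := U ∪ L with hULdef
  have hULcard : (UL.card : ℝ) ≤ α*n/4 + (ℓ+1) := by
    have h1 : UL.card ≤ U.card + L.card := Finset.card_union_le _ _
    have h2 : ((UL.card : ℕ) : ℝ) ≤ ((U.card : ℕ) : ℝ) + ((L.card : ℕ) : ℝ) := by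
      exact_mod_cast h1
    rw [hL] at h2
    push_cast at h2 ⊢
    linarith
  have hdeg' : ∀ (c : Fin (4*ℓ+2)) (u : Fin n), (1/2 + α) * n ≤ ((nbrF G c u).card : ℝ) := by
    intro c u
    have h1 := hdeg c u
    have h2 : (G c).neighborSet u = ↑(nbrF G c u) := by
      ext w
      simp [mem_nbrF, SimpleGraph.mem_neighborSet]
    rw [h2, Set.ncard_coe_finset] at h1
    exact h1
  have hTcard : ∀ k, k < 4*ℓ+3 → ∀ f : ℕ → Fin n, 4*ℓ+3 ≤ (TT ℓ n G UL vv k f).card := by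
    have key : ∀ (c c' : Fin (4*ℓ+2)) (u u' : Fin n),
        4*ℓ+3 ≤ (((nbrF G c u) ∩ (nbrF G c' u')) \ UL).card := by
      intro c c' u u'
      have hA := hdeg' c u
      have hB := hdeg' c' u'
      have h1 := Finset.card_inter_add_card_union (nbrF G c u) (nbrF G c' u')
      have h2 : (nbrF G c u ∪ nbrF G c' u').card ≤ n := by
        have h3 := Finset.card_le_univ (nbrF G c u ∪ nbrF G c' u')
        simpa using h3
      have h4 := Finset.card_le_card_sdiff_add_card (s := nbrF G c u ∩ nbrF G c' u') (t := UL)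
      have h1' : (((nbrF G c u ∩ nbrF G c' u').card : ℕ) : ℝ) +
          ((nbrF G c u ∪ nbrF G c' u').card : ℝ) = ((nbrF G c u).card : ℝ) +
          ((nbrF G c' u').card : ℝ) := by exact_mod_cast h1
      have h2' : ((nbrF G c u ∪ nbrF G c' u').card : ℝ) ≤ (n : ℝ) := by exact_mod_cast h2
      have h4' : (((nbrF G c u ∩ nbrF G c' u').card : ℕ) : ℝ) ≤
          ((((nbrF G c u ∩ nbrF G c' u') \ UL).card : ℕ) : ℝ) + (UL.card : ℝ) := by
        exact_mod_cast h4
      have hfin : ((4*ℓ+3 : ℕ) : ℝ) ≤ ((((nbrF G c u ∩ nbrF G c' u') \ UL).card : ℕ) : ℝ) := by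
        have hl0 : (0:ℝ) ≤ (ℓ:ℝ) := Nat.cast_nonneg ℓ
        push_cast
        linarith
      exact_mod_cast hfin
    intro k hk f
    unfold TT
    exact key _ _ _ _
  obtain ⟨f, hf, hfinj⟩ := dgreedy (V := Fin n) (4*ℓ+3) (TT ℓ n G UL vv)
    (TT_cong ℓ n G UL vv) hTcard
  have hfUL : ∀ k, k < 4*ℓ+3 → f k ∉ UL := by
    intro k hk
    have h := hf k hk
    unfold TT at h
    exact (Finset.mem_sdiff.mp h).2
  have trunc_lt : ∀ (k i : ℕ) (g : ℕ → Fin n), i < k → trunc n k vv g i = g i := by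
    intro k i g h
    unfold trunc
    rw [if_pos h]
  have h0 := hf 0 (by omega)
  unfold TT at h0
  rw [sp0, Finset.mem_sdiff, Finset.mem_inter, mem_nbrF, mem_nbrF] at h0
  dsimp only at h0
  obtain ⟨⟨hAm1, hAm2⟩, -⟩ := h0
  have h1 := hf 1 (by omega)
  unfold TT at h1
  rw [sp1, trunc_lt 1 0 f (by omega), Finset.mem_sdiff, Finset.mem_inter,
    mem_nbrF, mem_nbrF] at h1
  dsimp only at h1
  obtain ⟨⟨hAbl1, hAbl2⟩, -⟩ := h1
  have h2 := hf 2 (by omega)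
  unfold TT at h2
  rw [sp2, trunc_lt 2 0 f (by omega), trunc_lt 2 1 f (by omega), Finset.mem_sdiff,
    Finset.mem_inter, mem_nbrF, mem_nbrF] at h2
  dsimp only at h2
  obtain ⟨⟨hAp1, hAp2⟩, -⟩ := h2
  have h3 := hf 3 (by omega)
  unfold TT at h3
  rw [sp3, trunc_lt 3 1 f (by omega), trunc_lt 3 2 f (by omega), Finset.mem_sdiff,
    Finset.mem_inter, mem_nbrF, mem_nbrF] at h3
  dsimp only at h3
  obtain ⟨⟨hAt1, hAt2⟩, -⟩ := h3
  have h4 := hf 4 (by omega)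
  unfold TT at h4
  rw [sp4, trunc_lt 4 3 f (by omega), Finset.mem_sdiff, Finset.mem_inter,
    mem_nbrF] at h4
  dsimp only at h4
  obtain ⟨⟨hAy, -⟩, -⟩ := h4
  have hx := hf (4*ℓ+1) (by omega)
  unfold TT at hx
  rw [spx vv _ hℓ, trunc_lt (4*ℓ+1) (bIdx ℓ 0) f (by unfold bIdx; split_ifs <;> omega),
    Finset.mem_sdiff, Finset.mem_inter, mem_nbrF, mem_nbrF] at hx
  dsimp only at hx
  obtain ⟨⟨hAx1, hAx2⟩, -⟩ := hx
  have hAb : ∀ j, j + 2 ≤ ℓ → (G (colF ℓ (4*ℓ-1))).Adj (f 1) (f (5+j)) ∧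
      (G (colF ℓ (4*ℓ))).Adj (f 3) (f (5+j)) := by
    intro j hj
    have h := hf (5+j) (by omega)
    unfold TT at h
    rw [spb vv _ j hℓ hj, trunc_lt (5+j) 1 f (by omega), trunc_lt (5+j) 3 f (by omega),
      Finset.mem_sdiff, Finset.mem_inter, mem_nbrF, mem_nbrF] at h
    dsimp only at h
    exact h.1
  have hAc : ∀ k, k + 2 ≤ ℓ → (G (colF ℓ (4*k+4))).Adj (f (bIdx ℓ (k+1))) (f (ℓ+4+k)) ∧
      (G (colF ℓ (4*k+4))).Adj (vv (k+1)) (f (ℓ+4+k)) := by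
    intro k hk
    have h := hf (ℓ+4+k) (by omega)
    unfold TT at h
    rw [spcc vv _ k hℓ hk,
      trunc_lt (ℓ+4+k) (bIdx ℓ (k+1)) f (by unfold bIdx; split_ifs <;> omega),
      Finset.mem_sdiff, Finset.mem_inter, mem_nbrF, mem_nbrF] at h
    dsimp only at h
    exact h.1
  have hAd : ∀ k, k + 2 ≤ ℓ → (G (colF ℓ (4*k+1))).Adj (f (bIdx ℓ k)) (f (2*ℓ+3+k)) ∧
      (G (colF ℓ (4*k+1))).Adj (vv k) (f (2*ℓ+3+k)) := by
    intro k hk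
    have h := hf (2*ℓ+3+k) (by omega)
    unfold TT at h
    rw [spdd vv _ k hℓ hk,
      trunc_lt (2*ℓ+3+k) (bIdx ℓ k) f (by unfold bIdx; split_ifs <;> omega),
      Finset.mem_sdiff, Finset.mem_inter, mem_nbrF, mem_nbrF] at h
    dsimp only at h
    exact h.1
  have hAg : ∀ k, k + 2 ≤ ℓ → (G (colF ℓ (4*k+2))).Adj (f (2*ℓ+3+k)) (f (3*ℓ+2+k)) ∧
      (G (colF ℓ (4*k+3))).Adj (f (ℓ+4+k)) (f (3*ℓ+2+k)) := by
    intro k hk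
    have h := hf (3*ℓ+2+k) (by omega)
    unfold TT at h
    rw [spgg vv _ k hℓ hk, trunc_lt (3*ℓ+2+k) (2*ℓ+3+k) f (by omega),
      trunc_lt (3*ℓ+2+k) (ℓ+4+k) f (by omega),
      Finset.mem_sdiff, Finset.mem_inter, mem_nbrF, mem_nbrF] at h
    dsimp only at h
    exact h.1
  have hWleft : ∀ j, j + 1 ≤ ℓ → (G (colF ℓ (4*ℓ-1))).Adj (f 1) (f (bIdx ℓ j)) := by
    intro j hj
    by_cases hj2 : j + 2 ≤ ℓ
    · rw [bv_gen ℓ j hj2]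
      exact (hAb j hj2).1
    · rw [show j = ℓ-1 from by omega, bv_pen ℓ hℓ]
      exact hAp2
  have hWright : ∀ j, j ≤ ℓ → (G (colF ℓ (4*ℓ))).Adj (f (bIdx ℓ j)) (f 3) := by
    intro j hj
    by_cases hjt : j = ℓ
    · rw [hjt, bv_top]
      exact hAt1
    · by_cases hj2 : j + 2 ≤ ℓ
      · rw [bv_gen ℓ j hj2]
        exact (hAb j hj2).2.symm
      · rw [show j = ℓ-1 from by omega, bv_pen ℓ hℓ]
        exact hAt2
  set F : ℕ → Fin n := fun s => f (rho ℓ s) with hFdef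
  set R : Finset (Fin n) := ((Finset.range (4*ℓ+3)).erase (4*ℓ)).image F with hRdef
  have hRnotUL : ∀ w, w ∈ R → w ∉ UL := by
    intro w hw
    obtain ⟨s, hs, rfl⟩ := Finset.mem_image.mp hw
    rw [Finset.mem_erase, Finset.mem_range] at hs
    exact hfUL (rho ℓ s) (rho_lt ℓ s hℓ hs.2)
  have hFinj : ∀ s s', s < 4*ℓ+3 → s' < 4*ℓ+3 → F s = F s' → s = s' := by
    intro s s' hs hs' hE
    by_contra hne
    exact hfinj (rho ℓ s) (rho_lt ℓ s hℓ hs) (rho ℓ s') (rho_lt ℓ s' hℓ hs')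
      (rho_inj ℓ hℓ s s' hs hs' hne) hE
  have hRcard : R.card = 4*ℓ+2 := by
    have hinj : Set.InjOn F ↑((Finset.range (4*ℓ+3)).erase (4*ℓ)) := by
      intro s hs s' hs' hE
      simp only [Finset.coe_erase, Finset.coe_range, Set.mem_diff, Set.mem_Iio,
        Set.mem_singleton_iff] at hs hs'
      exact hFinj s s' hs.1 hs'.1 hE
    rw [hRdef, Finset.card_image_of_injOn hinj, Finset.card_erase_of_mem
      (Finset.mem_range.mpr (by omega)), Finset.card_range]
    omega
  refine ⟨R, f (4*ℓ+1), f 4, ?_, ?_, ?_, ?_, ?_, ?_⟩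
  · rw [Finset.disjoint_left]
    intro w hw hwU
    exact hRnotUL w hw (Finset.mem_union_left _ hwU)
  · rw [Finset.disjoint_left]
    intro w hw hwL
    exact hRnotUL w hw (Finset.mem_union_right _ hwL)
  · refine Finset.mem_image.mpr ⟨0, ?_, ?_⟩
    · rw [Finset.mem_erase]
      exact ⟨by omega, Finset.mem_range.mpr (by omega)⟩
    · show f (rho ℓ 0) = f (4*ℓ+1)
      rw [rv0]
  · refine Finset.mem_image.mpr ⟨4*ℓ+2, ?_, ?_⟩
    · rw [Finset.mem_erase]
      exact ⟨by omega, Finset.mem_range.mpr (by omega)⟩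
    · show f (rho ℓ (4*ℓ+2)) = f 4
      rw [rvy ℓ hℓ]
  · exact hfinj (4*ℓ+1) (by omega) 4 (by omega) (by omega)
  intro v hv
  obtain ⟨j, hj, hvj⟩ := hvvsurj v hv
  set σ : ℕ := if j = ℓ then 4*ℓ-1 else 4*j+1 with hσdef
  have hσfacts : (j = ℓ ∧ σ = 4*ℓ-1) ∨ (j+1 ≤ ℓ ∧ σ = 4*j+1) := by
    by_cases hjl : j = ℓ
    · exact Or.inl ⟨hjl, by rw [hσdef, if_pos hjl]⟩
    · exact Or.inr ⟨by omega, by rw [hσdef, if_neg hjl]⟩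
  have hσlow : 1 ≤ σ := by rcases hσfacts with ⟨h1,h2⟩|⟨h1,h2⟩ <;> omega
  have hσhigh : σ ≤ 4*ℓ-1 := by rcases hσfacts with ⟨h1,h2⟩|⟨h1,h2⟩ <;> omega
  have hσodd : σ % 2 = 1 := by rcases hσfacts with ⟨h1,h2⟩|⟨h1,h2⟩ <;> omega
  have hrσ : rho ℓ σ = bIdx ℓ j := by
    rcases hσfacts with ⟨h1,h2⟩|⟨h1,h2⟩
    · rw [h2, rvbl ℓ hℓ, h1, bv_top]
    · rw [h2, rvb ℓ j hℓ h1]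
  set q : ℕ → Fin n := fun u => if u = σ then v else if u = 4*ℓ then f (bIdx ℓ j) else F u
    with hqdef
  have hqeval : ∀ u, u ≠ σ → u ≠ 4*ℓ → q u = F u := by
    intro u hu1 hu2
    simp only [hqdef]
    rw [if_neg hu1, if_neg hu2]
  have hqσ : q σ = v := by
    simp [hqdef]
  have hqW : q (4*ℓ) = f (bIdx ℓ j) := by
    simp [hqdef, show ¬(4*ℓ = σ) from by omega]
  have hvnotR : v ∉ R := fun hvR => (hRnotUL v hvR) (Finset.mem_union_right _ hv)
  have himg : Finset.image (fun s : Fin (4*ℓ+3) => q s.val) Finset.univ = insert v R := by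
    apply Finset.Subset.antisymm
    · intro w hw
      obtain ⟨s, _, rfl⟩ := Finset.mem_image.mp hw
      show q s.val ∈ insert v R
      by_cases hc1 : s.val = σ
      · rw [hc1, hqσ]
        exact Finset.mem_insert_self v R
      · by_cases hc2 : s.val = 4*ℓ
        · rw [hc2, hqW]
          refine Finset.mem_insert_of_mem (Finset.mem_image.mpr ⟨σ, ?_, ?_⟩)
          · rw [Finset.mem_erase]
            exact ⟨by omega, Finset.mem_range.mpr (by omega)⟩
          · show f (rho ℓ σ) = f (bIdx ℓ j)
            rw [hrσ]
        · rw [hqeval s.val hc1 hc2]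
          refine Finset.mem_insert_of_mem (Finset.mem_image.mpr ⟨s.val, ?_, rfl⟩)
          rw [Finset.mem_erase]
          exact ⟨hc2, Finset.mem_range.mpr s.isLt⟩
    · intro w hw
      rcases Finset.mem_insert.mp hw with rfl | hwR
      · exact Finset.mem_image.mpr ⟨⟨σ, by omega⟩, Finset.mem_univ _, hqσ⟩
      · obtain ⟨u, hu, rfl⟩ := Finset.mem_image.mp hwR
        rw [Finset.mem_erase, Finset.mem_range] at hu
        by_cases hu2 : u = σ
        · refine Finset.mem_image.mpr ⟨⟨4*ℓ, by omega⟩, Finset.mem_univ _, ?_⟩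
          show q (4*ℓ) = F u
          rw [hqW, hu2]
          show f (bIdx ℓ j) = f (rho ℓ σ)
          rw [hrσ]
        · exact Finset.mem_image.mpr ⟨⟨u, by omega⟩, Finset.mem_univ _, hqeval u hu2 hu.1⟩
  have hcard2 : (Finset.image (fun s : Fin (4*ℓ+3) => q s.val) Finset.univ).card =
      (Finset.univ : Finset (Fin (4*ℓ+3))).card := by
    rw [himg, Finset.card_insert_of_notMem hvnotR, hRcard, Finset.card_univ, Fintype.card_fin]
  have hpinj : Function.Injective (fun s : Fin (4*ℓ+3) => q s.val) := by
    have hio := Finset.card_image_iff.mp hcard2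
    intro a b hab
    exact hio (Finset.mem_coe.mpr (Finset.mem_univ a)) (Finset.mem_coe.mpr (Finset.mem_univ b)) hab
  refine ⟨fun s : Fin (4*ℓ+3) => q s.val, hpinj, ?_, ?_, ?_, ?_⟩
  · show q ((0 : Fin (4*ℓ+3)).val) = f (4*ℓ+1)
    have h0v : ((0 : Fin (4*ℓ+3)).val) = 0 := rfl
    rw [h0v, hqeval 0 (by omega) (by omega)]
    show f (rho ℓ 0) = f (4*ℓ+1)
    rw [rv0]
  · show q ((Fin.last (4*ℓ+2)).val) = f 4
    rw [Fin.val_last]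
    rw [hqeval (4*ℓ+2) (by omega) (by omega)]
    show f (rho ℓ (4*ℓ+2)) = f 4
    rw [rvy ℓ hℓ]
  · have h1 : Set.range (fun s : Fin (4*ℓ+3) => q s.val) =
        ↑(Finset.image (fun s : Fin (4*ℓ+3) => q s.val) Finset.univ) := by
      rw [Finset.coe_image, Finset.coe_univ, Set.image_univ]
    rw [h1, himg, Finset.coe_insert, Set.insert_eq, Set.union_comm]
  intro i
  have hslt : i.val < 4*ℓ+2 := i.isLt
  have hGi : ∀ c : ℕ, i.val = c → G (colF ℓ c) = G i := by
    intro c hc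
    have hclt : c < 4*ℓ+2 := hc ▸ hslt
    congr 1
    apply Fin.ext
    show c % (4*ℓ+2) = i.val
    rw [Nat.mod_eq_of_lt hclt, hc]
  show (G i).Adj (q (i.castSucc).val) (q (i.succ).val)
  rw [Fin.coe_castSucc, Fin.val_succ]
  have hec : i.val = 0 ∨ (∃ k, k+2 ≤ ℓ ∧ i.val = 4*k+1) ∨ (∃ k, k+2 ≤ ℓ ∧ i.val = 4*k+2) ∨
      (∃ k, k+2 ≤ ℓ ∧ i.val = 4*k+3) ∨ (∃ k, k+2 ≤ ℓ ∧ i.val = 4*k+4) ∨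
      i.val = 4*ℓ-3 ∨ i.val = 4*ℓ-2 ∨ i.val = 4*ℓ-1 ∨ i.val = 4*ℓ ∨ i.val = 4*ℓ+1 := by
    by_cases h0 : i.val = 0
    · exact Or.inl h0
    by_cases hbig : 4*ℓ-3 ≤ i.val
    · exact Or.inr (Or.inr (Or.inr (Or.inr (Or.inr (by omega)))))
    rcases (by omega : i.val % 4 = 0 ∨ i.val % 4 = 1 ∨ i.val % 4 = 2 ∨ i.val % 4 = 3) with h|h|h|h
    · exact Or.inr (Or.inr (Or.inr (Or.inr (Or.inl ⟨i.val/4 - 1, by omega, by omega⟩))))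
    · exact Or.inr (Or.inl ⟨i.val/4, by omega, by omega⟩)
    · exact Or.inr (Or.inr (Or.inl ⟨i.val/4, by omega, by omega⟩))
    · exact Or.inr (Or.inr (Or.inr (Or.inl ⟨i.val/4, by omega, by omega⟩)))
  rcases hec with hcase|⟨k,hk,hcase⟩|⟨k,hk,hcase⟩|⟨k,hk,hcase⟩|⟨k,hk,hcase⟩|hcase|hcase|hcase|hcase|hcase
  · -- s = 0
    have hq1 : q 0 = f (4*ℓ+1) := by
      rw [hqeval 0 (by omega) (by omega)]
      simp only [hFdef]
      rw [rv0]
    by_cases hj0 : j = 0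
    · have hq2 : q (0+1) = v := by
        rw [show (0:ℕ)+1 = σ from by rcases hσfacts with ⟨a1,a2⟩|⟨a1,a2⟩ <;> omega]
        exact hqσ
      rw [hcase, hq1, hq2, ← hGi 0 hcase]
      have hv0 : vv 0 = v := by rw [← hj0]; exact hvj
      exact (hv0 ▸ hAx2).symm
    · have hq2 : q (0+1) = f (bIdx ℓ 0) := by
        rw [hqeval (0+1) (by rcases hσfacts with ⟨a1,a2⟩|⟨a1,a2⟩ <;> omega) (by omega)]
        simp only [hFdef]
        rw [show (0:ℕ)+1 = 4*0+1 from rfl, rvb ℓ 0 hℓ (by omega)]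
      rw [hcase, hq1, hq2, ← hGi 0 hcase]
      exact hAx1.symm
  · -- s = 4k+1
    have hq2 : q (4*k+1+1) = f (2*ℓ+3+k) := by
      rw [hqeval (4*k+1+1) (by omega) (by omega)]
      simp only [hFdef]
      rw [show 4*k+1+1 = 4*k+2 from rfl, rvd ℓ k hℓ hk]
    by_cases hjk : j = k
    · have hq1 : q (4*k+1) = v := by
        rw [show 4*k+1 = σ from by rcases hσfacts with ⟨a1,a2⟩|⟨a1,a2⟩ <;> omega]
        exact hqσ
      rw [hcase, hq1, hq2, ← hGi (4*k+1) hcase]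
      have hvk : vv k = v := by rw [← hjk]; exact hvj
      exact hvk ▸ (hAd k hk).2
    · have hq1 : q (4*k+1) = f (bIdx ℓ k) := by
        rw [hqeval (4*k+1) (by rcases hσfacts with ⟨a1,a2⟩|⟨a1,a2⟩ <;> omega) (by omega)]
        simp only [hFdef]
        rw [rvb ℓ k hℓ (by omega)]
      rw [hcase, hq1, hq2, ← hGi (4*k+1) hcase]
      exact (hAd k hk).1
  · -- s = 4k+2
    have hq1 : q (4*k+2) = f (2*ℓ+3+k) := by
      rw [hqeval (4*k+2) (by omega) (by omega)]
      simp only [hFdef]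
      rw [rvd ℓ k hℓ hk]
    have hq2 : q (4*k+2+1) = f (3*ℓ+2+k) := by
      rw [hqeval (4*k+2+1) (by rcases hσfacts with ⟨a1,a2⟩|⟨a1,a2⟩ <;> omega) (by omega)]
      simp only [hFdef]
      rw [show 4*k+2+1 = 4*k+3 from rfl, rvg ℓ k hℓ hk]
    rw [hcase, hq1, hq2, ← hGi (4*k+2) hcase]
    exact (hAg k hk).1
  · -- s = 4k+3
    have hq1 : q (4*k+3) = f (3*ℓ+2+k) := by
      rw [hqeval (4*k+3) (by rcases hσfacts with ⟨a1,a2⟩|⟨a1,a2⟩ <;> omega) (by omega)]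
      simp only [hFdef]
      rw [rvg ℓ k hℓ hk]
    have hq2 : q (4*k+3+1) = f (ℓ+4+k) := by
      rw [hqeval (4*k+3+1) (by omega) (by omega)]
      simp only [hFdef]
      rw [show 4*k+3+1 = 4*k+4 from rfl, rvc ℓ k hℓ hk]
    rw [hcase, hq1, hq2, ← hGi (4*k+3) hcase]
    exact (hAg k hk).2.symm
  · -- s = 4k+4
    have hq1 : q (4*k+4) = f (ℓ+4+k) := by
      rw [hqeval (4*k+4) (by omega) (by omega)]
      simp only [hFdef]
      rw [rvc ℓ k hℓ hk]
    by_cases hjk : j = k+1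
    · have hq2 : q (4*k+4+1) = v := by
        rw [show 4*k+4+1 = σ from by rcases hσfacts with ⟨a1,a2⟩|⟨a1,a2⟩ <;> omega]
        exact hqσ
      rw [hcase, hq1, hq2, ← hGi (4*k+4) hcase]
      have hvk : vv (k+1) = v := by rw [← hjk]; exact hvj
      exact hvk ▸ (hAc k hk).2.symm
    · have hq2 : q (4*k+4+1) = f (bIdx ℓ (k+1)) := by
        rw [hqeval (4*k+4+1) (by rcases hσfacts with ⟨a1,a2⟩|⟨a1,a2⟩ <;> omega) (by omega)]
        simp only [hFdef]
        rw [show 4*k+4+1 = 4*(k+1)+1 from rfl, rvb ℓ (k+1) hℓ (by omega)]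
      rw [hcase, hq1, hq2, ← hGi (4*k+4) hcase]
      exact (hAc k hk).1.symm
  · -- s = 4ℓ-3
    have hq2 : q (4*ℓ-3+1) = f 0 := by
      rw [hqeval (4*ℓ-3+1) (by omega) (by omega)]
      simp only [hFdef]
      rw [show 4*ℓ-3+1 = 4*ℓ-2 from by omega, rvm ℓ hℓ]
    by_cases hjp : j = ℓ-1
    · have hq1 : q (4*ℓ-3) = v := by
        rw [show 4*ℓ-3 = σ from by rcases hσfacts with ⟨a1,a2⟩|⟨a1,a2⟩ <;> omega]
        exact hqσ
      rw [hcase, hq1, hq2, ← hGi (4*ℓ-3) hcase]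
      have hvk : vv (ℓ-1) = v := by rw [← hjp]; exact hvj
      exact hvk ▸ hAm1
    · have hq1 : q (4*ℓ-3) = f 2 := by
        rw [hqeval (4*ℓ-3) (by rcases hσfacts with ⟨a1,a2⟩|⟨a1,a2⟩ <;> omega) (by omega)]
        simp only [hFdef]
        rw [show 4*ℓ-3 = 4*(ℓ-1)+1 from by omega, rvb ℓ (ℓ-1) hℓ (by omega), bv_pen ℓ hℓ]
      rw [hcase, hq1, hq2, ← hGi (4*ℓ-3) hcase]
      exact hAp1.symm
  · -- s = 4ℓ-2
    have hq1 : q (4*ℓ-2) = f 0 := by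
      rw [hqeval (4*ℓ-2) (by omega) (by omega)]
      simp only [hFdef]
      rw [rvm ℓ hℓ]
    by_cases hjt : j = ℓ
    · have hq2 : q (4*ℓ-2+1) = v := by
        rw [show 4*ℓ-2+1 = σ from by rcases hσfacts with ⟨a1,a2⟩|⟨a1,a2⟩ <;> omega]
        exact hqσ
      rw [hcase, hq1, hq2, ← hGi (4*ℓ-2) hcase]
      have hvk : vv ℓ = v := by rw [← hjt]; exact hvj
      exact hvk ▸ hAm2.symm
    · have hq2 : q (4*ℓ-2+1) = f 1 := by
        rw [hqeval (4*ℓ-2+1) (by rcases hσfacts with ⟨a1,a2⟩|⟨a1,a2⟩ <;> omega) (by omega)]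
        simp only [hFdef]
        rw [show 4*ℓ-2+1 = 4*ℓ-1 from by omega, rvbl ℓ hℓ]
      rw [hcase, hq1, hq2, ← hGi (4*ℓ-2) hcase]
      exact hAbl1
  · -- s = 4ℓ-1
    have hq2 : q (4*ℓ-1+1) = f (bIdx ℓ j) := by
      rw [show 4*ℓ-1+1 = 4*ℓ from by omega]
      exact hqW
    by_cases hjt : j = ℓ
    · have hq1 : q (4*ℓ-1) = v := by
        rw [show 4*ℓ-1 = σ from by rcases hσfacts with ⟨a1,a2⟩|⟨a1,a2⟩ <;> omega]
        exact hqσ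
      rw [hcase, hq1, hq2, ← hGi (4*ℓ-1) hcase]
      have hvk : vv ℓ = v := by rw [← hjt]; exact hvj
      rw [hjt, bv_top]
      exact hvk ▸ hAbl2
    · have hq1 : q (4*ℓ-1) = f 1 := by
        rw [hqeval (4*ℓ-1) (by rcases hσfacts with ⟨a1,a2⟩|⟨a1,a2⟩ <;> omega) (by omega)]
        simp only [hFdef]
        rw [rvbl ℓ hℓ]
      rw [hcase, hq1, hq2, ← hGi (4*ℓ-1) hcase]
      exact hWleft j (by omega)
  · -- s = 4ℓ
    have hq2 : q (4*ℓ+1) = f 3 := by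
      rw [hqeval (4*ℓ+1) (by omega) (by omega)]
      simp only [hFdef]
      rw [rvt ℓ hℓ]
    rw [hcase, hqW, hq2, ← hGi (4*ℓ) hcase]
    exact hWright j hj
  · -- s = 4ℓ+1
    have hq1 : q (4*ℓ+1) = f 3 := by
      rw [hqeval (4*ℓ+1) (by omega) (by omega)]
      simp only [hFdef]
      rw [rvt ℓ hℓ]
    have hq2 : q (4*ℓ+1+1) = f 4 := by
      rw [hqeval (4*ℓ+1+1) (by omega) (by omega)]
      simp only [hFdef]
      rw [show 4*ℓ+1+1 = 4*ℓ+2 from rfl, rvy ℓ hℓ]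
    rw [hcase, hq1, hq2, ← hGi (4*ℓ+1) hcase]
    exact hAy
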